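/- Let n ≥ 1 and let F be the field of fractions of the polynomial ring over ℤ in the 3n variables X₁,…,Xₙ, Z₁,…,Zₙ, W₁,…,Wₙ. For each choice of signs σ : {1,…,n} → {+1,−1}, set Mᵢ = E(Zᵢ,Wᵢ)·T(Xᵢ) if σ(i)=+1 and Mᵢ = E(Zᵢ,Wᵢ)·T(Xᵢ)⁻¹ if σ(i)=−1. Then the trace of the product M₁·M₂·⋯·Mₙ belongs to the subsemiring of F generated by the 3n variables and their inverses; that is, the trace is a Laurent polynomial in the variables Xᵢ, Zᵢ, Wᵢ with nonnegative integer coefficients. -/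

import Mathlib

open Matrix

/-- The matrix `T(X)` with rows `(0,0,1)`, `(0,-1,-1)`, `(X, 1+X, 1)`. -/
def Tmat {K : Type*} [Field K] (X : K) : Matrix (Fin 3) (Fin 3) K :=
  !![0, 0, 1; 0, -1, -1; X, 1 + X, 1]

/-- The matrix `E(Z,W)` with rows `(0,0,Z⁻¹)`, `(0,-1,0)`, `(W,0,0)`. -/
noncomputable def Emat {K : Type*} [Field K] (Z W : K) : Matrix (Fin 3) (Fin 3) K :=
  !![0, 0, Z⁻¹; 0, -1, 0; W, 0, 0]

/-- Explicit inverse of `Tmat X` (for `X ≠ 0`). -/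
noncomputable def Bmat {K : Type*} [Field K] (X : K) : Matrix (Fin 3) (Fin 3) K :=
  !![1, (1 + X) * X⁻¹, X⁻¹; -1, -1, 0; 1, 0, 0]

lemma Tmat_inv {K : Type*} [Field K] {X : K} (hX : X ≠ 0) : (Tmat X)⁻¹ = Bmat X := by
  apply inv_eq_right_inv
  ext i j
  fin_cases i <;> fin_cases j <;>
    simp [Tmat, Bmat, Matrix.mul_apply, Fin.sum_univ_three, vecHead, vecTail] <;>
    field_simp <;> ring

lemma ET {K : Type*} [Field K] (Z W X : K) : Emat Z W * Tmat X =
    !![X * Z⁻¹, (1 + X) * Z⁻¹, Z⁻¹; 0, 1, 1; 0, 0, W] := by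
  ext i j
  fin_cases i <;> fin_cases j <;>
    simp [Emat, Tmat, Matrix.mul_apply, Fin.sum_univ_three, vecHead, vecTail] <;> ring_nf

lemma ETinv {K : Type*} [Field K] (Z W : K) {X : K} (hX : X ≠ 0) :
    Emat Z W * (Tmat X)⁻¹ =
    !![Z⁻¹, 0, 0; 1, 1, 0; W, W * ((1 + X) * X⁻¹), W * X⁻¹] := by
  rw [Tmat_inv hX]
  ext i j
  fin_cases i <;> fin_cases j <;>
    simp [Emat, Bmat, Matrix.mul_apply, Fin.sum_univ_three, vecHead, vecTail] <;> ring_nf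

lemma prod_entries_mem {K : Type*} [Field K] (S : Subsemiring K)
    (L : List (Matrix (Fin 3) (Fin 3) K)) (h : ∀ A ∈ L, ∀ i j, A i j ∈ S) :
    ∀ i j, L.prod i j ∈ S := by
  induction L with
  | nil =>
    intro i j
    rw [List.prod_nil, Matrix.one_apply]
    split
    · exact S.one_mem
    · exact S.zero_mem
  | cons A L ih =>
    intro i j
    rw [List.prod_cons, Matrix.mul_apply]
    exact S.sum_mem fun k _ =>
      S.mul_mem (h A List.mem_cons_self i k)
        (ih (fun B hB => h B (List.mem_cons_of_mem _ hB)) k j)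

/-- Let `F` be the field of fractions of the polynomial ring over `ℤ` in the `3n`
variables `Xᵢ, Zᵢ, Wᵢ` (`i < n`, encoded as pairs in `Fin n × Fin 3`).  For any choice of
signs `σ`, let `Mᵢ = E(Zᵢ,Wᵢ)·T(Xᵢ)` if `σ i` and `Mᵢ = E(Zᵢ,Wᵢ)·T(Xᵢ)⁻¹` otherwise.
Then the trace of `M₀ ⋯ M_{n-1}` lies in the subsemiring of `F` generated by the `3n`
variables and their inverses, i.e. it is a Laurent polynomial in the variables with
nonnegative integer coefficients. -/
theorem trace_prod_mem_closure_of_vars (n : ℕ) (hn : 1 ≤ n) (σ : Fin n → Bool) :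
    letI F := FractionRing (MvPolynomial (Fin n × Fin 3) ℤ)
    letI v : Fin n × Fin 3 → F :=
      fun p => algebraMap (MvPolynomial (Fin n × Fin 3) ℤ) F (MvPolynomial.X p)
    letI M : Fin n → Matrix (Fin 3) (Fin 3) F :=
      fun i => if σ i then Emat (v (i, 1)) (v (i, 2)) * Tmat (v (i, 0))
               else Emat (v (i, 1)) (v (i, 2)) * (Tmat (v (i, 0)))⁻¹
    (List.ofFn M).prod.trace ∈
      Subsemiring.closure (Set.range v ∪ Set.range fun p => (v p)⁻¹) := by
  set F := FractionRing (MvPolynomial (Fin n × Fin 3) ℤ)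
  set v : Fin n × Fin 3 → F :=
    fun p => algebraMap (MvPolynomial (Fin n × Fin 3) ℤ) F (MvPolynomial.X p) with hv_def
  set S := Subsemiring.closure (Set.range v ∪ Set.range fun p => (v p)⁻¹) with hS
  have hv : ∀ p, v p ∈ S := fun p =>
    Subsemiring.subset_closure (Or.inl ⟨p, rfl⟩)
  have hvi : ∀ p, (v p)⁻¹ ∈ S := fun p =>
    Subsemiring.subset_closure (Or.inr ⟨p, rfl⟩)
  have hvne : ∀ p, v p ≠ 0 := fun p => by
    simp only [hv_def]
    exact (map_ne_zero_iff _ (IsFractionRing.injective _ _)).mpr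
      (MvPolynomial.X_ne_zero p)
  have key : ∀ A ∈ List.ofFn fun i =>
      if σ i then Emat (v (i, 1)) (v (i, 2)) * Tmat (v (i, 0))
      else Emat (v (i, 1)) (v (i, 2)) * (Tmat (v (i, 0)))⁻¹,
      ∀ i j, A i j ∈ S := by
    intro A hA
    rw [List.mem_ofFn] at hA
    obtain ⟨k, rfl⟩ := hA
    by_cases hk : σ k
    · simp only [hk, if_true, ET]
      intro i j
      fin_cases i <;> fin_cases j <;> simp <;>
        first
        | exact S.mul_mem (hv _) (hvi _)
        | exact S.mul_mem (S.add_mem S.one_mem (hv _)) (hvi _)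
        | exact hvi _
        | exact hv _
        | exact S.one_mem
        | exact S.zero_mem
    · simp only [hk, if_false, ETinv _ _ (hvne (k, 0))]
      intro i j
      fin_cases i <;> fin_cases j <;> simp <;>
        first
        | exact S.mul_mem (hv _) (S.mul_mem (S.add_mem S.one_mem (hv _)) (hvi _))
        | exact S.mul_mem (hv _) (hvi _)
        | exact hvi _
        | exact hv _
        | exact S.one_mem
        | exact S.zero_mem
  rw [Matrix.trace]
  exact S.sum_mem fun i _ => prod_entries_mem S _ key i i
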